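/- Let K be a field of characteristic zero and let K[x_i | i ∈ ℕ] be the commutative polynomial algebra in indeterminates x_i indexed by the natural numbers. Let D be the derivation D = Σ_{n≥0} x_{n+1} ∂/∂x_n (the unique derivation with D(x_n) = x_{n+1} for all n), and for each Q ∈ K[x_i | i ∈ ℕ] let D_Q be the derivation D_Q = Σ_{n≥0} D^n(Q) ∂/∂x_n (a finite sum when applied to any polynomial). Define P ◁ Q := D_Q(P). Then ◁ is a right pre-Lie product: for all P, Q, R ∈ K[x_i | i ∈ ℕ], (P ◁ Q) ◁ R − P ◁ (Q ◁ R) = (P ◁ R) ◁ Q − P ◁ (R ◁ Q). -/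
import Mathlib


/-- On the polynomial algebra `K[x_i | i ∈ ℕ]`, let `D` be the
derivation with `D(x_n) = x_{n+1}`, and for each polynomial `Q` let `D_Q` be the
derivation with `D_Q(x_n) = D^n(Q)`. Then `P ◁ Q := D_Q(P)` is a right pre-Lie
product. -/
theorem preLie_coInv_NMI (K : Type*) [Field K] [CharZero K]
    (D : Derivation K (MvPolynomial ℕ K) (MvPolynomial ℕ K))
    (hD : ∀ n : ℕ, D (MvPolynomial.X n) = MvPolynomial.X (n + 1))
    (Dop : MvPolynomial ℕ K → Derivation K (MvPolynomial ℕ K) (MvPolynomial ℕ K))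
    (hDop : ∀ (Q : MvPolynomial ℕ K) (n : ℕ),
      Dop Q (MvPolynomial.X n) = (⇑D)^[n] Q) :
    ∀ P Q R : MvPolynomial ℕ K,
      Dop R (Dop Q P) - Dop (Dop R Q) P = Dop Q (Dop R P) - Dop (Dop Q R) P := by
  -- D commutes with every Dop Q
  have hcomm : ∀ Q P : MvPolynomial ℕ K, D (Dop Q P) = Dop Q (D P) := by
    intro Q
    have h0 : ⁅D, Dop Q⁆ = 0 := by
      apply MvPolynomial.derivation_ext
      intro n
      rw [Derivation.commutator_apply, Derivation.zero_apply, hDop, hD, hDop,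
        ← Function.iterate_succ_apply' (⇑D) n Q, sub_self]
    intro P
    have := congrArg (fun (E : Derivation K (MvPolynomial ℕ K) (MvPolynomial ℕ K)) => E P) h0
    simp only [Derivation.commutator_apply, Derivation.zero_apply] at this
    linear_combination this
  -- Dop Q commutes with iterates of D
  have hit : ∀ (Q R : MvPolynomial ℕ K) (n : ℕ),
      Dop Q ((⇑D)^[n] R) = (⇑D)^[n] (Dop Q R) := by
    intro Q R n
    induction n with
    | zero => rfl
    | succ n ih =>
        rw [Function.iterate_succ_apply' (⇑D) n R, ← hcomm, ih,
          ← Function.iterate_succ_apply' (⇑D) n (Dop Q R)]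
  intro P Q R
  have h0 : ⁅Dop R, Dop Q⁆ + Dop (Dop Q R) - Dop (Dop R Q) = 0 := by
    apply MvPolynomial.derivation_ext
    intro n
    simp only [Derivation.sub_apply, Derivation.add_apply, Derivation.commutator_apply,
      Derivation.zero_apply, hDop, hit]
    ring
  have := congrArg (fun (E : Derivation K (MvPolynomial ℕ K) (MvPolynomial ℕ K)) => E P) h0
  simp only [Derivation.sub_apply, Derivation.add_apply, Derivation.commutator_apply,
    Derivation.zero_apply] at this
  linear_combination this
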